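/- Let K be a field, F a subfield of K, and g₁, g₂, g₃, g₄ ∈ F. Suppose a, b, c ∈ K are algebraically independent over F and d ∈ K satisfies a·c + b·d = 1. If (g₁ + a)·(g₃ + c) + (g₂ + b)·(g₄ + d) = 1, then g₁ = g₂ = g₃ = g₄ = 0. -/

import Mathlib

set_option synthInstance.maxHeartbeats 400000 in
/-- First computation in Theorem 3.8: if `a, b, c` are algebraically independent over a
subfield `F`, `a·c + b·d = 1`, and `g₁, g₂, g₃, g₄ ∈ F` satisfy
`(g₁+a)·(g₃+c) + (g₂+b)·(g₄+d) = 1`, then `g₁ = g₂ = g₃ = g₄ = 0`. -/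
theorem stabilizer_trivial_field_part {K : Type*} [Field K] (F : Subfield K)
    (g₁ g₂ g₃ g₄ : K) (hg₁ : g₁ ∈ F) (hg₂ : g₂ ∈ F) (hg₃ : g₃ ∈ F) (hg₄ : g₄ ∈ F)
    (a b c d : K) (hind : AlgebraicIndependent F ![a, b, c])
    (habcd : a * c + b * d = 1)
    (h : (g₁ + a) * (g₃ + c) + (g₂ + b) * (g₄ + d) = 1) :
    g₁ = 0 ∧ g₂ = 0 ∧ g₃ = 0 ∧ g₄ = 0 := by
  classical
  set G₁ : F := ⟨g₁, hg₁⟩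
  set G₂ : F := ⟨g₂, hg₂⟩
  set G₃ : F := ⟨g₃, hg₃⟩
  set G₄ : F := ⟨g₄, hg₄⟩
  open MvPolynomial in
  set p : MvPolynomial (Fin 3) F :=
    C G₂ + C (G₁*G₃ + G₂*G₄) * X 1 + C G₁ * (X 1 * X 2) + C G₃ * (X 0 * X 1)
      + C G₄ * X 1 ^ 2 - C G₂ * (X 0 * X 2) with hpdef
  have hp0 : MvPolynomial.aeval ![a, b, c] p = 0 := by
    simp only [hpdef]
    simp only [map_add, map_sub, map_mul, map_pow, MvPolynomial.aeval_C,
      MvPolynomial.aeval_X, Matrix.cons_val_zero, Matrix.cons_val_one, Matrix.head_cons,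
      Matrix.cons_val_two, Matrix.tail_cons]
    show g₂ + (g₁*g₃ + g₂*g₄) * b + g₁ * (b*c) + g₃ * (a*b) + g₄ * b^2 - g₂ * (a*c) = 0
    linear_combination b * h - (g₂ + b) * habcd
  have hp : p = 0 := hind (by rw [hp0, map_zero])
  have ev : ∀ v : Fin 3 → K, MvPolynomial.aeval v p = 0 := by
    intro v; rw [hp, map_zero]
  have key : ∀ v : Fin 3 → K,
      g₂ + (g₁*g₃ + g₂*g₄) * v 1 + g₁ * (v 1 * v 2) + g₃ * (v 0 * v 1)
        + g₄ * (v 1) ^ 2 - g₂ * (v 0 * v 2) = 0 := by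
    intro v
    have := ev v
    rw [hpdef] at this
    simp only [map_add, map_sub, map_mul, map_pow, MvPolynomial.aeval_C,
      MvPolynomial.aeval_X] at this
    exact this
  have e0 := key ![0, 0, 0]
  have e1 := key ![0, 1, 0]
  have e2 := key ![1, 1, 0]
  have e3 := key ![0, 1, 1]
  simp only [Matrix.cons_val_zero, Matrix.cons_val_one, Matrix.head_cons,
    Matrix.cons_val_two, Matrix.tail_cons] at e0 e1 e2 e3
  have hg2 : g₂ = 0 := by linear_combination e0
  have hg3 : g₃ = 0 := by linear_combination e2 - e1
  have hg1 : g₁ = 0 := by linear_combination e3 - e1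
  have hg4 : g₄ = 0 := by linear_combination e1 - e0 - g₃ * hg1 - g₄ * hg2
  exact ⟨hg1, hg2, hg3, hg4⟩
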